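/- Let G = ∞·K_n with n finite, and let φ, ψ ∈ Aut(G). Suppose that for every finite k and every conjugacy class t of S_n, φ and ψ have the same number of k-cycles of copies of K_n with twist type t, and that φ and ψ have the same number of infinite cycles of copies of K_n. Then φ and ψ are conjugate in Aut(G). -/

import Mathlib

/-- The graph `∞·Kₙ` on vertex set `ℕ × Fin n`. -/
def inftyKn (n : ℕ) : SimpleGraph (ℕ × Fin n) where
  Adj p q := p.1 = q.1 ∧ p.2 ≠ q.2
  symm := by constructor; intro p q h; exact ⟨h.1.symm, h.2.symm⟩
  loopless := by constructor; intro p h; exact h.2 rfl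

/-- The set of cycles (orbits) of a permutation of ℕ (indexing the copies of `Kₙ`). -/
def cycles (σ : Equiv.Perm ℕ) : Set (Set ℕ) :=
  Set.range fun i => {j | σ.SameCycle i j}

/-- The cycle `O` of copies is finite of length `k` and has twist type the conjugacy
class of `t`: restricting `φ^k` to a copy in `O` gives a permutation conjugate to `t`. -/
def hasTwistType (n : ℕ) (φ : inftyKn n ≃g inftyKn n) (O : Set ℕ) (k : ℕ)
    (t : Equiv.Perm (Fin n)) : Prop :=
  Nat.card O = k ∧ O.Finite ∧
    ∃ i ∈ O, ∃ π : Equiv.Perm (Fin n),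
      (∀ a : Fin n, (⇑φ)^[k] (i, a) = (i, π a)) ∧ IsConj π t


open Equiv Function

theorem Equiv.Perm.apply_inv_self {α : Type*} (f : Equiv.Perm α) (x : α) : f (f⁻¹ x) = x :=
  f.apply_symm_apply x

theorem Equiv.Perm.inv_apply_self {α : Type*} (f : Equiv.Perm α) (x : α) : f⁻¹ (f x) = x :=
  f.symm_apply_apply x

/-- semiconjugacy of first coordinates, extended to integer powers -/
lemma zpow_fst {n : ℕ} {Φ : Equiv.Perm (ℕ × Fin n)} {σ : Equiv.Perm ℕ}
    (h : ∀ v, (Φ v).1 = σ v.1) (m : ℤ) : ∀ v, ((Φ ^ m) v).1 = (σ ^ m) v.1 := by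
  have hinv : ∀ v, (Φ⁻¹ v).1 = σ⁻¹ v.1 := by
    intro v
    have h2 := h (Φ⁻¹ v)
    rw [Equiv.Perm.apply_inv_self] at h2
    rw [h2, Equiv.Perm.inv_apply_self]
  induction m using Int.induction_on with
  | zero => intro v; simp
  | succ k ih =>
      intro v
      rw [zpow_add_one, zpow_add_one, Equiv.Perm.mul_apply, Equiv.Perm.mul_apply, ih, h]
  | pred k ih =>
      intro v
      rw [zpow_sub_one, zpow_sub_one, Equiv.Perm.mul_apply, Equiv.Perm.mul_apply, ih, hinv]

lemma zpow_point {β γ : Type*} (F : Equiv.Perm β) (g : γ → β) (π : Equiv.Perm γ)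
    (h : ∀ a, F (g a) = g (π a)) (m : ℤ) : ∀ a, (F ^ m) (g a) = g ((π ^ m) a) := by
  have hinv : ∀ a, F⁻¹ (g a) = g (π⁻¹ a) := by
    intro a
    have h2 := h (π⁻¹ a)
    rw [Equiv.Perm.apply_inv_self] at h2
    rw [← h2, Equiv.Perm.inv_apply_self]
  induction m using Int.induction_on with
  | zero => intro a; simp
  | succ k ih =>
      intro a
      rw [zpow_add_one, zpow_add_one, Equiv.Perm.mul_apply, Equiv.Perm.mul_apply, h, ih]
  | pred k ih =>
      intro a
      rw [zpow_sub_one, zpow_sub_one, Equiv.Perm.mul_apply, Equiv.Perm.mul_apply, hinv, ih]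

lemma fix_zpow {β : Type*} (τ : Equiv.Perm β) {x : β} (h : τ x = x) (m : ℤ) : (τ ^ m) x = x := by
  have := zpow_point τ (fun _ : Unit => x) 1 (fun _ => by simpa) m Unit.unit
  simpa using this

lemma zpow_cancel (σ : Equiv.Perm ℕ) (a b : ℤ) (x y : ℕ)
    (ha : (σ ^ a) x = y) (hb : (σ ^ b) x = y) : (σ ^ (a - b)) y = y := by
  have h : (σ ^ (a - b)) ((σ ^ b) x) = (σ ^ a) x := by
    rw [← Equiv.Perm.mul_apply, ← zpow_add, sub_add_cancel]
  rw [hb, ha] at h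
  exact h

lemma snd_bijective {n : ℕ} (F : Equiv.Perm (ℕ × Fin n)) (b b' : ℕ)
    (h : ∀ a : Fin n, (F (b, a)).1 = b') :
    Function.Bijective (fun a : Fin n => (F (b, a)).2) := by
  rw [← Finite.injective_iff_bijective]
  intro x y hxy
  have h1 : F (b, x) = F (b, y) := Prod.ext (by rw [h x, h y]) hxy
  have h2 := F.injective h1
  exact ((Prod.mk.injEq _ _ _ _).mp h2).2

/-- second-coordinate restriction of a permutation mapping copy `b` into a single copy -/
noncomputable def rperm {n : ℕ} (F : Equiv.Perm (ℕ × Fin n)) (b : ℕ) : Equiv.Perm (Fin n) :=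
  if h : Function.Bijective (fun a : Fin n => (F (b, a)).2) then Equiv.ofBijective _ h else 1

lemma rperm_spec {n : ℕ} (F : Equiv.Perm (ℕ × Fin n)) (b b' : ℕ)
    (h : ∀ a : Fin n, (F (b, a)).1 = b') (a : Fin n) :
    F (b, a) = (b', rperm F b a) := by
  have hbij := snd_bijective F b b' h
  rw [rperm, dif_pos hbij]
  exact Prod.ext (h a) rfl

noncomputable def twistP {n : ℕ} (Φ : Equiv.Perm (ℕ × Fin n)) (k : ℕ) (b : ℕ) :
    Equiv.Perm (Fin n) := rperm (Φ ^ (k : ℤ)) b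

lemma twistP_spec {n : ℕ} (Φ : Equiv.Perm (ℕ × Fin n)) (k b : ℕ)
    (h : ∀ a : Fin n, ((Φ ^ (k : ℤ)) (b, a)).1 = b) (a : Fin n) :
    (Φ ^ (k : ℤ)) (b, a) = (b, twistP Φ k b a) :=
  rperm_spec _ b b h a

lemma twist_zpow {n : ℕ} (Φ : Equiv.Perm (ℕ × Fin n)) (k : ℕ) (b : ℕ) (π : Equiv.Perm (Fin n))
    (h : ∀ a, (Φ ^ (k : ℤ)) (b, a) = (b, π a)) (s : ℤ) (a : Fin n) :
    (Φ ^ ((k : ℤ) * s)) (b, a) = (b, (π ^ s) a) := by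
  rw [zpow_mul]
  exact zpow_point (Φ ^ (k : ℤ)) (fun a => (b, a)) π h s a

open scoped Classical in
/-- choice of basepoint of a set -/
noncomputable def bpt (O : Set ℕ) : ℕ := if h : O.Nonempty then h.choose else 0

lemma bpt_mem {O : Set ℕ} (h : O.Nonempty) : bpt O ∈ O := by
  rw [bpt, dif_pos h]; exact h.choose_spec

open scoped Classical in
/-- choice of an exponent connecting two points of a cycle -/
noncomputable def expn (σ : Equiv.Perm ℕ) (b i : ℕ) : ℤ :=
  if h : σ.SameCycle b i then h.choose else 0

lemma expn_spec {σ : Equiv.Perm ℕ} {b i : ℕ} (h : σ.SameCycle b i) :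
    (σ ^ expn σ b i) b = i := by
  rw [expn, dif_pos h]; exact h.choose_spec

open scoped Classical in
/-- choice of a conjugating element -/
noncomputable def conjP {n : ℕ} (π π' : Equiv.Perm (Fin n)) : Equiv.Perm (Fin n) :=
  if h : IsConj π π' then (isConj_iff.mp h).choose else 1

lemma conjP_conj {n : ℕ} {π π' : Equiv.Perm (Fin n)} (h : IsConj π π') :
    conjP π π' * π * (conjP π π')⁻¹ = π' := by
  rw [conjP, dif_pos h]
  exact (isConj_iff.mp h).choose_spec

lemma conjP_zpow {n : ℕ} {π π' : Equiv.Perm (Fin n)} (h : IsConj π π') (s : ℤ) (a : Fin n) :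
    conjP π π' ((π ^ s) a) = (π' ^ s) (conjP π π' a) := by
  set c := conjP π π' with hc
  have hs := conjP_conj h
  rw [← hc] at hs
  have h2 : π' ^ s = c * π ^ s * c⁻¹ := by
    rw [← hs, conj_zpow]
  rw [h2]
  simp [Equiv.Perm.mul_apply]


/-! ### cycle lemmas -/

lemma mem_cycOf (σ : Equiv.Perm ℕ) (i : ℕ) : i ∈ {j | σ.SameCycle i j} := ⟨0, by simp⟩

lemma cyc_eq_of_mem {σ : Equiv.Perm ℕ} {O : Set ℕ} (hO : O ∈ cycles σ) {x : ℕ} (hx : x ∈ O) :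
    O = {j | σ.SameCycle x j} := by
  obtain ⟨i0, rfl⟩ := hO
  have h0 : σ.SameCycle i0 x := hx
  ext y
  exact ⟨fun hy => h0.symm.trans hy, fun hy => h0.trans hy⟩

lemma cyc_closed {σ : Equiv.Perm ℕ} {O : Set ℕ} (hO : O ∈ cycles σ) {x : ℕ} (hx : x ∈ O)
    (d : ℤ) : (σ ^ d) x ∈ O := by
  obtain ⟨i0, rfl⟩ := hO
  exact Equiv.Perm.SameCycle.trans (hx : σ.SameCycle i0 x) ⟨d, rfl⟩

lemma cyc_nonempty {σ : Equiv.Perm ℕ} {O : Set ℕ} (hO : O ∈ cycles σ) : O.Nonempty := by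
  obtain ⟨i0, rfl⟩ := hO
  exact ⟨i0, mem_cycOf σ i0⟩

lemma nat_pow_apply (σ : Equiv.Perm ℕ) (m : ℕ) (x : ℕ) : (σ ^ (m : ℤ)) x = (⇑σ)^[m] x := by
  rw [zpow_natCast, Equiv.Perm.coe_pow]

/-- reduction of an integer power modulo a known period -/
lemma reduce_mod (σ : Equiv.Perm ℕ) (x : ℕ) (N : ℕ) (hN : 0 < N)
    (hfix : (σ ^ (N : ℤ)) x = x) (m : ℤ) :
    (σ ^ m) x = (⇑σ)^[(m % (N : ℤ)).toNat] x ∧ (m % (N : ℤ)).toNat < N := by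
  have hN' : ((N : ℤ)) ≠ 0 := by exact_mod_cast hN.ne'
  have hge : 0 ≤ m % (N : ℤ) := Int.emod_nonneg m hN'
  have hlt : m % (N : ℤ) < N := Int.emod_lt_of_pos m (by exact_mod_cast hN)
  constructor
  · have h2 : σ ^ m = σ ^ (m % (N : ℤ)) * (σ ^ (N : ℤ)) ^ (m / (N : ℤ)) := by
      rw [← zpow_mul, ← zpow_add, Int.emod_add_mul_ediv m (N : ℤ)]
    have htn : m % (N : ℤ) = (((m % (N : ℤ)).toNat : ℕ) : ℤ) := by omega
    rw [h2, Equiv.Perm.mul_apply, fix_zpow _ hfix]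
    conv_lhs => rw [htn]
    rw [nat_pow_apply]
  · omega

lemma period_key (σ : Equiv.Perm ℕ) (O : Set ℕ) (hO : O ∈ cycles σ) (hfin : O.Finite)
    (x : ℕ) (hx : x ∈ O) (d : ℤ) : (σ ^ d) x = x ↔ (Nat.card O : ℤ) ∣ d := by
  have hOx : O = {j | σ.SameCycle x j} := cyc_eq_of_mem hO hx
  have hmem : ∀ m : ℕ, (⇑σ)^[m] x ∈ O := fun m => by
    rw [← nat_pow_apply]; exact cyc_closed hO hx m
  haveI : Finite O := hfin.to_subtype
  -- cancellation
  have hc : ∀ m1 m2 : ℕ, m1 ≤ m2 → (⇑σ)^[m1] x = (⇑σ)^[m2] x → (⇑σ)^[m2 - m1] x = x := by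
    intro m1 m2 hle he
    have h1 : (⇑σ)^[m1] ((⇑σ)^[m2 - m1] x) = (⇑σ)^[m1] x := by
      rw [← Function.iterate_add_apply, Nat.add_sub_cancel' hle]
      exact he.symm
    exact Function.Injective.iterate σ.injective m1 h1
  -- periodicity
  have hper : x ∈ Function.periodicPts ⇑σ := by
    obtain ⟨m1, m2, hne, heq⟩ := Finite.exists_ne_map_eq_of_infinite
      (fun m : ℕ => (⟨(⇑σ)^[m] x, hmem m⟩ : O))
    have heq' : (⇑σ)^[m1] x = (⇑σ)^[m2] x := congrArg Subtype.val heq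
    rcases hne.lt_or_gt with h12 | h21
    · exact ⟨m2 - m1, by omega, hc m1 m2 h12.le heq'⟩
    · exact ⟨m1 - m2, by omega, hc m2 m1 h21.le heq'.symm⟩
  set T := Function.minimalPeriod ⇑σ x with hT
  have hTpos : 0 < T := Function.minimalPeriod_pos_of_mem_periodicPts hper
  have hTfix : (⇑σ)^[T] x = x := Function.iterate_minimalPeriod
  have hTfix' : (σ ^ (T : ℤ)) x = x := by rw [nat_pow_apply]; exact hTfix
  -- injectivity below T
  have hmapinj : ∀ m1 m2 : ℕ, m1 < T → m2 < T → (⇑σ)^[m1] x = (⇑σ)^[m2] x → m1 = m2 := by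
    intro m1 m2 h1 h2 he
    rcases le_total m1 m2 with h | h
    · have hp := hc m1 m2 h he
      have hdvd : T ∣ (m2 - m1) := Function.isPeriodicPt_iff_minimalPeriod_dvd.mp hp
      have h0 := Nat.eq_zero_of_dvd_of_lt hdvd
      omega
    · have hp := hc m2 m1 h he.symm
      have hdvd : T ∣ (m1 - m2) := Function.isPeriodicPt_iff_minimalPeriod_dvd.mp hp
      have h0 := Nat.eq_zero_of_dvd_of_lt hdvd
      omega
  -- surjectivity
  have hsurj : ∀ y ∈ O, ∃ m : ℕ, m < T ∧ (⇑σ)^[m] x = y := by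
    intro y hy
    rw [hOx] at hy
    obtain ⟨m, hm⟩ := hy
    obtain ⟨hred, hlt⟩ := reduce_mod σ x T hTpos hTfix' m
    exact ⟨(m % (T : ℤ)).toNat, hlt, by rw [← hred]; exact hm⟩
  have hcard : Nat.card O = T := by
    have e : Fin T ≃ O := Equiv.ofBijective (fun m => ⟨(⇑σ)^[m.1] x, hmem m.1⟩) (by
      constructor
      · intro a b hab
        exact Fin.ext (hmapinj a.1 b.1 a.2 b.2 (congrArg Subtype.val hab))
      · intro y
        obtain ⟨m, hmT, hmy⟩ := hsurj y.1 y.2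
        exact ⟨⟨m, hmT⟩, Subtype.ext hmy⟩)
    rw [Nat.card_congr e.symm, Nat.card_eq_fintype_card, Fintype.card_fin]
  rw [hcard]
  constructor
  · intro hd
    obtain ⟨hred, hlt⟩ := reduce_mod σ x T hTpos hTfix' d
    have h0 : (⇑σ)^[(d % (T : ℤ)).toNat] x = x := by rw [← hred]; exact hd
    have hdvd : T ∣ (d % (T : ℤ)).toNat := Function.isPeriodicPt_iff_minimalPeriod_dvd.mp h0
    have h00 : (d % (T : ℤ)).toNat = 0 := Nat.eq_zero_of_dvd_of_lt hdvd hlt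
    have hge2 : 0 ≤ d % (T : ℤ) := Int.emod_nonneg d (by exact_mod_cast hTpos.ne')
    have hz : d % (T : ℤ) = 0 := by omega
    exact Int.dvd_of_emod_eq_zero hz
  · rintro ⟨s, rfl⟩
    rw [zpow_mul]
    exact fix_zpow _ hTfix' s

lemma period_inf (σ : Equiv.Perm ℕ) (O : Set ℕ) (hO : O ∈ cycles σ) (hinf : O.Infinite)
    {x : ℕ} (hx : x ∈ O) {d : ℤ} (hd : (σ ^ d) x = x) : d = 0 := by
  by_contra h0
  apply hinf
  have habs : (σ ^ ((d.natAbs : ℕ) : ℤ)) x = x := by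
    rcases Int.natAbs_eq d with h | h
    · rw [← h]; exact hd
    · have h2 : (σ ^ d)⁻¹ x = x := by
        nth_rewrite 1 [← hd]
        exact Equiv.Perm.inv_apply_self _ _
      rw [show ((d.natAbs : ℕ) : ℤ) = -d by omega, zpow_neg]
      exact h2
  have hNpos : 0 < d.natAbs := Int.natAbs_pos.mpr h0
  have hsub : O ⊆ (fun m : ℕ => (⇑σ)^[m] x) '' (Set.Iio d.natAbs) := by
    intro y hy
    rw [cyc_eq_of_mem hO hx] at hy
    obtain ⟨m, hm⟩ := hy
    obtain ⟨hred, hlt⟩ := reduce_mod σ x d.natAbs hNpos habs m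
    refine ⟨(m % (d.natAbs : ℤ)).toNat, hlt, ?_⟩
    show (⇑σ)^[(m % (d.natAbs : ℤ)).toNat] x = y
    rw [← hred]; exact hm
  exact Set.Finite.subset ((Set.finite_Iio d.natAbs).image _) hsub

lemma twist_conj {n : ℕ} {Φ : Equiv.Perm (ℕ × Fin n)} {σ : Equiv.Perm ℕ}
    (hsc : ∀ v, (Φ v).1 = σ v.1) {b i' : ℕ} (hbc : σ.SameCycle b i')
    {k : ℕ} {π π' : Equiv.Perm (Fin n)}
    (hb : ∀ a, (Φ ^ (k : ℤ)) (b, a) = (b, π a))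
    (hi : ∀ a, (Φ ^ (k : ℤ)) (i', a) = (i', π' a)) : IsConj π π' := by
  obtain ⟨m, hm⟩ := hbc
  have hfst : ∀ a : Fin n, ((Φ ^ m) (b, a)).1 = i' := fun a => by
    rw [zpow_fst hsc m (b, a)]; exact hm
  have hcspec := rperm_spec (Φ ^ m) b i' hfst
  set c := rperm (Φ ^ m) b with hcdef
  have key : ∀ a, π' (c a) = c (π a) := by
    intro a
    have h1 : (Φ ^ m) ((Φ ^ (k : ℤ)) (b, a)) = (Φ ^ (k : ℤ)) ((Φ ^ m) (b, a)) := by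
      rw [← Equiv.Perm.mul_apply, ← Equiv.Perm.mul_apply, ← zpow_add, ← zpow_add, add_comm]
    rw [hb a, hcspec (π a), hcspec a, hi (c a)] at h1
    exact (((Prod.mk.injEq _ _ _ _).mp h1).2).symm
  rw [isConj_iff]
  refine ⟨c, ?_⟩
  ext a
  simp only [Equiv.Perm.mul_apply]
  rw [← key (c⁻¹ a), Equiv.Perm.apply_inv_self]

open scoped Classical in
/-- the combinatorial type of a cycle: `none` if infinite, else length and twist class -/
noncomputable def tpOf {n : ℕ} (Φ : Equiv.Perm (ℕ × Fin n)) (O : Set ℕ) :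
    Option (ℕ × ConjClasses (Equiv.Perm (Fin n))) :=
  if O.Finite then some (Nat.card O, ConjClasses.mk (twistP Φ (Nat.card O) (bpt O))) else none

lemma tpOf_eq_none_iff {n : ℕ} (Φ : Equiv.Perm (ℕ × Fin n)) (O : Set ℕ) :
    tpOf Φ O = none ↔ O.Infinite := by
  rw [tpOf]
  split_ifs with h
  · exact iff_of_false (by simp) (fun h' => h' h)
  · exact iff_of_true rfl h

lemma tpOf_eq_some_iff {n : ℕ} (Φ : Equiv.Perm (ℕ × Fin n)) (O : Set ℕ)
    {k : ℕ} {cls : ConjClasses (Equiv.Perm (Fin n))} :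
    tpOf Φ O = some (k, cls) ↔
      O.Finite ∧ Nat.card O = k ∧ ConjClasses.mk (twistP Φ (Nat.card O) (bpt O)) = cls := by
  rw [tpOf]
  split_ifs with h
  · simp only [Option.some.injEq, Prod.mk.injEq]
    exact ⟨fun ⟨h1, h2⟩ => ⟨h, h1, h2⟩, fun ⟨_, h1, h2⟩ => ⟨h1, h2⟩⟩
  · exact iff_of_false (by simp) (fun hh => h hh.1)

example (n : ℕ) (φ : inftyKn n ≃g inftyKn n) (v : ℕ × Fin n) : φ v = φ.toEquiv v := rfl

lemma iter_eq_zpow {n : ℕ} (φ : inftyKn n ≃g inftyKn n) (k : ℕ) (v : ℕ × Fin n) :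
    (⇑φ)^[k] v = (φ.toEquiv ^ (k : ℤ)) v := by
  rw [zpow_natCast, Equiv.Perm.coe_pow]
  rfl

lemma fiber_iff {n : ℕ} (φ : inftyKn n ≃g inftyKn n) (σ : Equiv.Perm ℕ)
    (hsc : ∀ v : ℕ × Fin n, (φ.toEquiv v).1 = σ v.1)
    {k : ℕ} {cls : ConjClasses (Equiv.Perm (Fin n))} {t : Equiv.Perm (Fin n)}
    (ht : ConjClasses.mk t = cls) (O : Set ℕ) :
    (∃ h : O ∈ cycles σ, tpOf φ.toEquiv O = some (k, cls)) ↔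
      (O ∈ cycles σ ∧ hasTwistType n φ O k t) := by
  set Φ := φ.toEquiv with hΦ
  constructor
  · rintro ⟨hO, hsome⟩
    rw [tpOf_eq_some_iff] at hsome
    obtain ⟨hfin, hcard, hcls⟩ := hsome
    subst hcard
    refine ⟨hO, rfl, hfin, bpt O, bpt_mem (cyc_nonempty hO),
      twistP Φ (Nat.card O) (bpt O), ?_, ?_⟩
    · intro a
      rw [iter_eq_zpow]
      exact twistP_spec Φ (Nat.card O) (bpt O) (fun a' => by
        rw [zpow_fst hsc]
        exact (period_key σ O hO hfin _ (bpt_mem (cyc_nonempty hO)) _).mpr dvd_rfl) a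
    · exact ConjClasses.mk_eq_mk_iff_isConj.mp (hcls.trans ht.symm)
  · rintro ⟨hO, hcard, hfin, i', hi'mem, π', hπ', hconj⟩
    refine ⟨hO, ?_⟩
    rw [tpOf_eq_some_iff]
    refine ⟨hfin, hcard, ?_⟩
    have hb : ∀ a, (Φ ^ ((Nat.card O : ℕ) : ℤ)) (bpt O, a) = (bpt O, twistP Φ (Nat.card O) (bpt O) a) :=
      twistP_spec Φ (Nat.card O) (bpt O) (fun a => by
        rw [zpow_fst hsc]
        exact (period_key σ O hO hfin _ (bpt_mem (cyc_nonempty hO)) _).mpr dvd_rfl)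
    have hi : ∀ a, (Φ ^ ((Nat.card O : ℕ) : ℤ)) (i', a) = (i', π' a) := fun a => by
      rw [hcard, ← iter_eq_zpow]
      exact hπ' a
    have hcc : σ.SameCycle (bpt O) i' := by
      have h1 := cyc_eq_of_mem hO (bpt_mem (cyc_nonempty hO))
      rw [h1] at hi'mem
      exact hi'mem
    have hconj2 : IsConj (twistP Φ (Nat.card O) (bpt O)) π' := twist_conj hsc hcc hb hi
    rw [← ht]
    exact ConjClasses.mk_eq_mk_iff_isConj.mpr (hconj2.trans hconj)

lemma zpow_zpow_apply {β : Type*} (σ : Equiv.Perm β) (a b : ℤ) (x : β) :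
    (σ ^ a) ((σ ^ b) x) = (σ ^ (a + b)) x := by
  rw [← Equiv.Perm.mul_apply, ← zpow_add]

noncomputable def cycS (σ : Equiv.Perm ℕ) (i : ℕ) : {O : Set ℕ // O ∈ cycles σ} :=
  ⟨{j | σ.SameCycle i j}, ⟨i, rfl⟩⟩

lemma mem_cycS (σ : Equiv.Perm ℕ) (i : ℕ) : i ∈ (cycS σ i).1 := mem_cycOf σ i

lemma cycS_eq {σ : Equiv.Perm ℕ} {i i' : ℕ} (h : σ.SameCycle i i') : cycS σ i = cycS σ i' :=
  Subtype.ext (cyc_eq_of_mem (cycS σ i).2 (h : i' ∈ (cycS σ i).1))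

set_option maxHeartbeats 1600000 in
/-- Automorphisms `φ, ψ` of `∞·Kₙ` (n finite) with, for every finite `k` and every twist
type `t`, the same number of `k`-cycles of copies of twist type `t`, and the same number
of infinite cycles of copies, are conjugate in `Aut(∞·Kₙ)`. -/
theorem stmt10 (n : ℕ) [NeZero n] (φ ψ : inftyKn n ≃g inftyKn n)
    (σφ σψ : Equiv.Perm ℕ)
    (hφ : ∀ (i : ℕ) (a : Fin n), (φ (i, a)).1 = σφ i)
    (hψ : ∀ (i : ℕ) (a : Fin n), (ψ (i, a)).1 = σψ i)
    (hfin : ∀ (k : ℕ), 0 < k → ∀ t : Equiv.Perm (Fin n),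
      Cardinal.mk {O : Set ℕ // O ∈ cycles σφ ∧ hasTwistType n φ O k t} =
      Cardinal.mk {O : Set ℕ // O ∈ cycles σψ ∧ hasTwistType n ψ O k t})
    (hinf : Cardinal.mk {O : Set ℕ // O ∈ cycles σφ ∧ O.Infinite} =
      Cardinal.mk {O : Set ℕ // O ∈ cycles σψ ∧ O.Infinite}) :
    ∃ δ : inftyKn n ≃g inftyKn n, ∀ v, δ (φ v) = ψ (δ v) := by
  classical
  set Φ : Equiv.Perm (ℕ × Fin n) := φ.toEquiv with hΦdef
  set Ψ : Equiv.Perm (ℕ × Fin n) := ψ.toEquiv with hΨdef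
  have hscφ : ∀ v : ℕ × Fin n, (Φ v).1 = σφ v.1 := fun v => hφ v.1 v.2
  have hscψ : ∀ v : ℕ × Fin n, (Ψ v).1 = σψ v.1 := fun v => hψ v.1 v.2
  -- matching of fibers of the type map
  have hFib : ∀ idx : Option (ℕ × ConjClasses (Equiv.Perm (Fin n))),
      Nonempty ({O : {O : Set ℕ // O ∈ cycles σφ} // tpOf Φ O.1 = idx} ≃
        {O : {O : Set ℕ // O ∈ cycles σψ} // tpOf Ψ O.1 = idx}) := by
    rintro (_ | ⟨k, cls⟩)
    · refine ⟨((Equiv.subtypeSubtypeEquivSubtypeExists _ _).trans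
        (Equiv.subtypeEquivRight ?_)).trans
        (((Cardinal.eq.mp hinf).some).trans
        (((Equiv.subtypeSubtypeEquivSubtypeExists _ _).trans
          (Equiv.subtypeEquivRight ?_)).symm))⟩
      · intro O
        exact ⟨fun ⟨h, hnone⟩ => ⟨h, (tpOf_eq_none_iff Φ O).mp hnone⟩,
          fun ⟨h, hinf'⟩ => ⟨h, (tpOf_eq_none_iff Φ O).mpr hinf'⟩⟩
      · intro O
        exact ⟨fun ⟨h, hnone⟩ => ⟨h, (tpOf_eq_none_iff Ψ O).mp hnone⟩,
          fun ⟨h, hinf'⟩ => ⟨h, (tpOf_eq_none_iff Ψ O).mpr hinf'⟩⟩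
    · rcases Nat.eq_zero_or_pos k with hk | hk
      · subst hk
        have h1 : IsEmpty {O : {O : Set ℕ // O ∈ cycles σφ} // tpOf Φ O.1 = some (0, cls)} := by
          rw [isEmpty_subtype]
          rintro ⟨O, hO⟩ hsome
          rw [tpOf_eq_some_iff] at hsome
          obtain ⟨hfin', hcard, -⟩ := hsome
          haveI := hfin'.to_subtype
          haveI := (cyc_nonempty hO).to_subtype
          exact absurd hcard Nat.card_pos.ne'
        have h2 : IsEmpty {O : {O : Set ℕ // O ∈ cycles σψ} // tpOf Ψ O.1 = some (0, cls)} := by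
          rw [isEmpty_subtype]
          rintro ⟨O, hO⟩ hsome
          rw [tpOf_eq_some_iff] at hsome
          obtain ⟨hfin', hcard, -⟩ := hsome
          haveI := hfin'.to_subtype
          haveI := (cyc_nonempty hO).to_subtype
          exact absurd hcard Nat.card_pos.ne'
        exact ⟨@Equiv.equivOfIsEmpty _ _ h1 h2⟩
      · obtain ⟨t, ht⟩ := ConjClasses.exists_rep cls
        refine ⟨((Equiv.subtypeSubtypeEquivSubtypeExists _ _).trans
            (Equiv.subtypeEquivRight (fun O => fiber_iff φ σφ hscφ ht O))).trans
          ((Cardinal.eq.mp (hfin k hk t)).some.trans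
            (((Equiv.subtypeSubtypeEquivSubtypeExists _ _).trans
              (Equiv.subtypeEquivRight (fun O => fiber_iff ψ σψ hscψ ht O))).symm))⟩
  have F := fun idx => (hFib idx).some
  set e : {O : Set ℕ // O ∈ cycles σφ} ≃ {O : Set ℕ // O ∈ cycles σψ} :=
    ((Equiv.sigmaFiberEquiv (fun O : {O : Set ℕ // O ∈ cycles σφ} => tpOf Φ O.1)).symm.trans
      ((Equiv.sigmaCongrRight F).trans
        (Equiv.sigmaFiberEquiv (fun O : {O : Set ℕ // O ∈ cycles σψ} => tpOf Ψ O.1)))) with hedef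
  have heO : ∀ O, e O = (F (tpOf Φ O.1) ⟨O, rfl⟩).1 := fun O => rfl
  have he : ∀ O, tpOf Ψ (e O).1 = tpOf Φ O.1 := by
    intro O
    rw [heO O]
    exact (F (tpOf Φ O.1) ⟨O, rfl⟩).2
  -- per-index data
  have hBsc : ∀ i, σφ.SameCycle (bpt (cycS σφ i).1) i :=
    fun i => Equiv.Perm.SameCycle.symm (bpt_mem (cyc_nonempty (cycS σφ i).2) : σφ.SameCycle i _)
  set M : ℕ → ℤ := fun i => expn σφ (bpt (cycS σφ i).1) i with hMdef
  have hMspec : ∀ i, (σφ ^ M i) (bpt (cycS σφ i).1) = i := fun i => expn_spec (hBsc i)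
  -- matched cycle data
  have hfinm : ∀ i, (cycS σφ i).1.Finite →
      (e (cycS σφ i)).1.Finite ∧ Nat.card (e (cycS σφ i)).1 = Nat.card (cycS σφ i).1 ∧
        IsConj (twistP Φ (Nat.card (cycS σφ i).1) (bpt (cycS σφ i).1))
          (twistP Ψ (Nat.card (e (cycS σφ i)).1) (bpt (e (cycS σφ i)).1)) := by
    intro i hf
    have h1 := he (cycS σφ i)
    have h2 : tpOf Φ (cycS σφ i).1 = some (Nat.card (cycS σφ i).1,
        ConjClasses.mk (twistP Φ (Nat.card (cycS σφ i).1) (bpt (cycS σφ i).1))) :=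
      (tpOf_eq_some_iff Φ _).mpr ⟨hf, rfl, rfl⟩
    rw [h2, tpOf_eq_some_iff] at h1
    obtain ⟨hf', hcard, hcls⟩ := h1
    exact ⟨hf', hcard, (ConjClasses.mk_eq_mk_iff_isConj.mp hcls).symm⟩
  have hinfm : ∀ i, ¬(cycS σφ i).1.Finite → (e (cycS σφ i)).1.Infinite := by
    intro i hf
    have h1 := he (cycS σφ i)
    have h2 : tpOf Φ (cycS σφ i).1 = none := (tpOf_eq_none_iff Φ _).mpr hf
    rw [h2] at h1
    exact (tpOf_eq_none_iff Ψ _).mp h1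
  -- twist specifications
  have hπφ : ∀ i, (cycS σφ i).1.Finite → ∀ a,
      (Φ ^ ((Nat.card (cycS σφ i).1 : ℕ) : ℤ)) (bpt (cycS σφ i).1, a)
        = (bpt (cycS σφ i).1, twistP Φ (Nat.card (cycS σφ i).1) (bpt (cycS σφ i).1) a) := by
    intro i hf
    exact twistP_spec _ _ _ (fun a => by
      rw [zpow_fst hscφ]
      exact (period_key σφ _ (cycS σφ i).2 hf _ (bpt_mem (cyc_nonempty (cycS σφ i).2)) _).mpr dvd_rfl)
  have hπψ : ∀ i, (cycS σφ i).1.Finite → ∀ a,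
      (Ψ ^ ((Nat.card (cycS σφ i).1 : ℕ) : ℤ)) (bpt (e (cycS σφ i)).1, a)
        = (bpt (e (cycS σφ i)).1, twistP Ψ (Nat.card (e (cycS σφ i)).1) (bpt (e (cycS σφ i)).1) a) := by
    intro i hf
    obtain ⟨hf', hcard, -⟩ := hfinm i hf
    have h0 := twistP_spec Ψ (Nat.card (e (cycS σφ i)).1) (bpt (e (cycS σφ i)).1) (fun a => by
      rw [zpow_fst hscψ]
      exact (period_key σψ _ (e (cycS σφ i)).2 hf' _ (bpt_mem (cyc_nonempty (e (cycS σφ i)).2)) _).mpr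
        dvd_rfl)
    intro a
    rw [← hcard]
    exact h0 a
  -- the conjugating map
  set D : ℕ × Fin n → ℕ × Fin n := fun v =>
    (Ψ ^ M v.1) (bpt (e (cycS σφ v.1)).1,
      conjP (twistP Φ (Nat.card (cycS σφ v.1).1) (bpt (cycS σφ v.1).1))
        (twistP Ψ (Nat.card (e (cycS σφ v.1)).1) (bpt (e (cycS σφ v.1)).1))
        (((Φ ^ (-M v.1)) v).2)) with hDdef
  have hBi : ∀ i, (σφ ^ (-M i)) i = bpt (cycS σφ i).1 := by
    intro i
    apply (σφ ^ M i).injective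
    rw [zpow_zpow_apply, show M i + -M i = 0 from by ring, zpow_zero, hMspec i]
    rfl
  have hfstD : ∀ v : ℕ × Fin n, (Φ ^ (-M v.1)) v = (bpt (cycS σφ v.1).1, ((Φ ^ (-M v.1)) v).2) := by
    intro v
    refine Prod.ext ?_ rfl
    rw [zpow_fst hscφ]
    exact hBi v.1
  -- commutation
  have hcomm : ∀ v, D (Φ v) = Ψ (D v) := by
    intro v
    have hstep : σφ.SameCycle v.1 ((Φ v).1) := by rw [hscφ v]; exact ⟨1, by simp⟩
    have hCOs : cycS σφ ((Φ v).1) = cycS σφ v.1 := (cycS_eq hstep).symm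
    have hμ'b : (σφ ^ M ((Φ v).1)) (bpt (cycS σφ v.1).1) = (Φ v).1 := by
      have h1 := hMspec ((Φ v).1)
      rw [hCOs] at h1
      exact h1
    have hμ1 : (σφ ^ (M v.1 + 1)) (bpt (cycS σφ v.1).1) = (Φ v).1 := by
      rw [show M v.1 + 1 = 1 + M v.1 from by ring, ← zpow_zpow_apply σφ 1 (M v.1), hMspec v.1,
        zpow_one]
      exact (hscφ v).symm
    have hfixy : (σφ ^ (M ((Φ v).1) - (M v.1 + 1))) ((Φ v).1) = (Φ v).1 :=
      zpow_cancel σφ _ _ _ _ hμ'b hμ1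
    have hmem' : (Φ v).1 ∈ (cycS σφ v.1).1 := hstep
    simp only [hDdef]
    rw [hCOs]
    by_cases hf : (cycS σφ v.1).1.Finite
    · obtain ⟨s, hs⟩ := (period_key σφ _ (cycS σφ v.1).2 hf _ hmem' _).mp hfixy
      have h1 : (Φ ^ (-M ((Φ v).1))) (Φ v)
          = (bpt (cycS σφ v.1).1,
            ((twistP Φ (Nat.card (cycS σφ v.1).1) (bpt (cycS σφ v.1).1)) ^ (-s))
              (((Φ ^ (-M v.1)) v).2)) := by
        have e1 := zpow_zpow_apply Φ (-M ((Φ v).1)) 1 v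
        rw [zpow_one] at e1
        rw [e1, show -M ((Φ v).1) + 1
              = ((Nat.card (cycS σφ v.1).1 : ℕ) : ℤ) * (-s) + (-M v.1) from by linear_combination -hs,
          ← zpow_zpow_apply Φ (((Nat.card (cycS σφ v.1).1 : ℕ) : ℤ) * (-s)) (-M v.1) v, hfstD v]
        exact twist_zpow Φ _ _ _ (hπφ v.1 hf) (-s) _
      simp only [h1]
      rw [conjP_zpow (hfinm v.1 hf).2.2 (-s)]
      rw [← twist_zpow Ψ _ _ _ (hπψ v.1 hf) (-s)
        (conjP (twistP Φ (Nat.card (cycS σφ v.1).1) (bpt (cycS σφ v.1).1))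
          (twistP Ψ (Nat.card (e (cycS σφ v.1)).1) (bpt (e (cycS σφ v.1)).1)) (((Φ ^ (-M v.1)) v).2))]
      rw [zpow_zpow_apply]
      have e4 : ∀ x : ℕ × Fin n, Ψ ((Ψ ^ M v.1) x)
          = (Ψ ^ (M ((Φ v).1) + ((Nat.card (cycS σφ v.1).1 : ℕ) : ℤ) * (-s))) x := by
        intro x
        have e1 := zpow_zpow_apply Ψ 1 (M v.1) x
        rw [zpow_one] at e1
        rw [e1, show (1 : ℤ) + M v.1
          = M ((Φ v).1) + ((Nat.card (cycS σφ v.1).1 : ℕ) : ℤ) * (-s) from by linear_combination -hs]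
      rw [e4]
    · have h0 : M ((Φ v).1) - (M v.1 + 1) = 0 := period_inf σφ _ (cycS σφ v.1).2 hf hmem' hfixy
      have harg : (Φ ^ (-M ((Φ v).1))) (Φ v) = (Φ ^ (-M v.1)) v := by
        have e1 := zpow_zpow_apply Φ (-M ((Φ v).1)) 1 v
        rw [zpow_one] at e1
        rw [e1, show -M ((Φ v).1) + 1 = -M v.1 from by omega]
      rw [harg]
      have e3 : ∀ x : ℕ × Fin n, Ψ ((Ψ ^ M v.1) x) = (Ψ ^ M ((Φ v).1)) x := by
        intro x
        have e1 := zpow_zpow_apply Ψ 1 (M v.1) x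
        rw [zpow_one] at e1
        rw [e1, show (1 : ℤ) + M v.1 = M ((Φ v).1) from by omega]
      rw [e3]
  -- first coordinate of D
  have hDfst : ∀ v : ℕ × Fin n, (D v).1 = (σψ ^ M v.1) (bpt (e (cycS σφ v.1)).1) := by
    intro v
    simp only [hDdef]
    rw [zpow_fst hscψ]
  have hDmem : ∀ v, (D v).1 ∈ (e (cycS σφ v.1)).1 := by
    intro v
    rw [hDfst v]
    exact cyc_closed (e (cycS σφ v.1)).2 (bpt_mem (cyc_nonempty (e (cycS σφ v.1)).2)) _
  have hfst_inj : ∀ v w : ℕ × Fin n, (D v).1 = (D w).1 → v.1 = w.1 := by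
    intro v w hvw
    have hx2 : (D v).1 ∈ (e (cycS σφ w.1)).1 := by rw [hvw]; exact hDmem w
    have h1 : e (cycS σφ v.1) = e (cycS σφ w.1) := by
      apply Subtype.ext
      rw [cyc_eq_of_mem (e (cycS σφ v.1)).2 (hDmem v), cyc_eq_of_mem (e (cycS σφ w.1)).2 hx2]
    have h2 : cycS σφ v.1 = cycS σφ w.1 := e.injective h1
    have hμv := hMspec v.1
    have hμw := hMspec w.1
    rw [← h2] at hμw
    have hτ : (σψ ^ M v.1) (bpt (e (cycS σφ v.1)).1) = (σψ ^ M w.1) (bpt (e (cycS σφ v.1)).1) := by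
      rw [← hDfst v, hvw, hDfst w, h2]
    have hfixψ : (σψ ^ (M v.1 - M w.1)) ((D v).1) = (D v).1 :=
      zpow_cancel σψ _ _ (bpt (e (cycS σφ v.1)).1) _ (hDfst v).symm (hτ.symm.trans (hDfst v).symm)
    by_cases hf : (cycS σφ v.1).1.Finite
    · obtain ⟨hf', hcard, -⟩ := hfinm v.1 hf
      have hdvd : ((Nat.card (e (cycS σφ v.1)).1 : ℕ) : ℤ) ∣ (M v.1 - M w.1) :=
        (period_key σψ _ (e (cycS σφ v.1)).2 hf' _ (hDmem v) _).mp hfixψ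
      rw [hcard] at hdvd
      have hfixφ : (σφ ^ (M v.1 - M w.1)) (bpt (cycS σφ v.1).1) = bpt (cycS σφ v.1).1 :=
        (period_key σφ _ (cycS σφ v.1).2 hf _ (bpt_mem (cyc_nonempty (cycS σφ v.1).2)) _).mpr
          (by exact_mod_cast hdvd)
      calc v.1 = (σφ ^ M v.1) (bpt (cycS σφ v.1).1) := hμv.symm
        _ = (σφ ^ M w.1) ((σφ ^ (M v.1 - M w.1)) (bpt (cycS σφ v.1).1)) := by
            rw [zpow_zpow_apply, show M w.1 + (M v.1 - M w.1) = M v.1 from by ring]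
        _ = (σφ ^ M w.1) (bpt (cycS σφ v.1).1) := by rw [hfixφ]
        _ = w.1 := hμw
    · have h0 : M v.1 - M w.1 = 0 :=
        period_inf σψ _ (e (cycS σφ v.1)).2 (hinfm v.1 hf) (hDmem v) hfixψ
      have hMeq : M v.1 = M w.1 := by omega
      rw [← hμv, ← hμw, hMeq]
  have hsnd_inj : ∀ i : ℕ, Function.Injective (fun a : Fin n => (D (i, a)).2) := by
    intro i a a' h
    have hfsteq : (D (i, a)).1 = (D (i, a')).1 := by rw [hDfst (i, a), hDfst (i, a')]
    have h1 : D (i, a) = D (i, a') := Prod.ext hfsteq h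
    simp only [hDdef] at h1
    have h2 := (Ψ ^ M (i, a).1).injective h1
    have h3 := congrArg Prod.snd h2
    have h4 := (conjP (twistP Φ (Nat.card (cycS σφ (i, a).1).1) (bpt (cycS σφ (i, a).1).1))
      (twistP Ψ (Nat.card (e (cycS σφ (i, a).1)).1) (bpt (e (cycS σφ (i, a).1)).1))).injective h3
    have h5 : (Φ ^ (-M (i, a).1)) (i, a) = (Φ ^ (-M (i, a').1)) (i, a') := by
      rw [hfstD (i, a), hfstD (i, a')]
      exact Prod.ext rfl h4
    have h6 := (Φ ^ (-M (i, a).1)).injective h5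
    exact ((Prod.mk.injEq _ _ _ _).mp h6).2
  have hinjD : Function.Injective D := by
    intro v w h
    have h1 : v.1 = w.1 := hfst_inj v w (congrArg Prod.fst h)
    obtain ⟨i, a⟩ := v
    obtain ⟨j, b⟩ := w
    simp only at h1
    subst h1
    have h2 : a = b := hsnd_inj i (congrArg Prod.snd h)
    rw [h2]
  have hsurjD : Function.Surjective D := by
    rintro ⟨i', a'⟩
    set O : {O : Set ℕ // O ∈ cycles σφ} := e.symm ⟨{j | σψ.SameCycle i' j}, ⟨i', rfl⟩⟩
      with hOdef
    have heOq : e O = ⟨{j | σψ.SameCycle i' j}, ⟨i', rfl⟩⟩ := e.apply_symm_apply _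
    have hj0 : bpt (e O).1 ∈ (e O).1 := bpt_mem (cyc_nonempty (e O).2)
    have hi'mem : i' ∈ (e O).1 := by rw [heOq]; exact mem_cycOf σψ i'
    have hsc0 : σψ.SameCycle (bpt (e O).1) i' := by
      have h1 := cyc_eq_of_mem (e O).2 hj0
      rw [h1] at hi'mem
      exact hi'mem
    obtain ⟨d, hd⟩ := hsc0
    have hbO : bpt O.1 ∈ O.1 := bpt_mem (cyc_nonempty O.2)
    have hiO : (σφ ^ d) (bpt O.1) ∈ O.1 := cyc_closed O.2 hbO d
    set i : ℕ := (σφ ^ d) (bpt O.1) with hidef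
    have hCOi : cycS σφ i = O := by
      apply Subtype.ext
      exact (cyc_eq_of_mem O.2 hiO).symm
    have hMi : (σφ ^ M i) (bpt O.1) = i := by
      have h1 := hMspec i
      rw [hCOi] at h1
      exact h1
    have hfixb : (σφ ^ (M i - d)) i = i := zpow_cancel σφ (M i) d (bpt O.1) i hMi hidef.symm
    have hj0i' : (σψ ^ M i) (bpt (e O).1) = i' := by
      by_cases hf : O.1.Finite
      · have hfCO : (cycS σφ i).1.Finite := by rw [hCOi]; exact hf
        obtain ⟨hf', hcard, -⟩ := hfinm i hfCO
        rw [hCOi] at hf' hcard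
        have hk := (period_key σφ O.1 O.2 hf i hiO _).mp hfixb
        rw [← hcard] at hk
        have hfixj : (σψ ^ (M i - d)) (bpt (e O).1) = bpt (e O).1 :=
          (period_key σψ _ (e O).2 hf' _ hj0 _).mpr hk
        calc (σψ ^ M i) (bpt (e O).1)
            = (σψ ^ d) ((σψ ^ (M i - d)) (bpt (e O).1)) := by
              rw [zpow_zpow_apply, show d + (M i - d) = M i from by ring]
          _ = (σψ ^ d) (bpt (e O).1) := by rw [hfixj]
          _ = i' := hd
      · have h0 : M i - d = 0 := period_inf σφ O.1 O.2 hf hiO hfixb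
        have hMd : M i = d := by omega
        rw [hMd]
        exact hd
    obtain ⟨z, hz⟩ := (snd_bijective (Ψ ^ M i) (bpt (e O).1) i' (fun x => by
      rw [zpow_fst hscψ]; exact hj0i')).2 a'
    set c' : Equiv.Perm (Fin n) := conjP (twistP Φ (Nat.card (cycS σφ i).1) (bpt (cycS σφ i).1))
      (twistP Ψ (Nat.card (e (cycS σφ i)).1) (bpt (e (cycS σφ i)).1)) with hc'def
    refine ⟨(Φ ^ M i) (bpt O.1, c'⁻¹ z), ?_⟩
    have hv1 : ((Φ ^ M i) (bpt O.1, c'⁻¹ z)).1 = i := by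
      rw [zpow_fst hscφ]
      exact hMi
    simp only [hDdef]
    rw [hv1]
    have harg : (Φ ^ (-M i)) ((Φ ^ M i) (bpt O.1, c'⁻¹ z)) = (bpt O.1, c'⁻¹ z) := by
      rw [zpow_zpow_apply, show -M i + M i = 0 from by ring, zpow_zero]
      rfl
    simp only [harg]
    rw [← hc'def, Equiv.Perm.apply_inv_self, hCOi]
    exact Prod.ext (by rw [zpow_fst hscψ]; exact hj0i') hz
  -- assemble the graph isomorphism
  refine ⟨⟨Equiv.ofBijective D ⟨hinjD, hsurjD⟩, ?_⟩, ?_⟩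
  · intro p q
    show (inftyKn n).Adj (D p) (D q) ↔ (inftyKn n).Adj p q
    constructor
    · rintro ⟨h1, h2⟩
      have hpq := hfst_inj p q h1
      refine ⟨hpq, fun hc => h2 ?_⟩
      rw [show p = q from Prod.ext hpq hc]
    · rintro ⟨h1, h2⟩
      refine ⟨?_, ?_⟩
      · rw [hDfst p, hDfst q, h1]
      · intro hc
        apply h2
        obtain ⟨ip, ap⟩ := p
        obtain ⟨iq, aq⟩ := q
        simp only at h1
        subst h1
        exact hsnd_inj ip hc
  · intro v
    exact hcomm v
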